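/- arXiv:2512.07289 — 2 statements merged into one kernel-verified Lean document; each statement's English description precedes it below -/
import Mathlib

section
/- With the periodic CoM-free map m as above and w(x) = x − ⌊x⌋ the fractional-part map applied entrywise, m is also invariant under entrywise wrapping combined with a common shift: for any ε ∈ ℝ^n with (x̄(ε), ȳ(ε)) ≠ (0,0) and any r ∈ ℝ, m(w(ε + r·1)) = m(ε). -/
open Real Finset

/-- `ȳ(ε) = (1/n) Σ_j sin(2π ε_j)`. -/
noncomputable def ybar {n : ℕ} (ε : Fin n → ℝ) : ℝ :=
  (1 / (n : ℝ)) * ∑ j : Fin n, Real.sin (2 * π * ε j)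

/-- `x̄(ε) = (1/n) Σ_j cos(2π ε_j)`. -/
noncomputable def xbar {n : ℕ} (ε : Fin n → ℝ) : ℝ :=
  (1 / (n : ℝ)) * ∑ j : Fin n, Real.cos (2 * π * ε j)

/-- `θ(ε) = atan2(ȳ(ε), x̄(ε))`, realized as the complex argument of `x̄ + i ȳ`. -/
noncomputable def theta {n : ℕ} (ε : Fin n → ℝ) : ℝ :=
  Complex.arg ⟨xbar ε, ybar ε⟩

/-- The periodic CoM-free map `m(ε)_i = w(ε_i − θ(ε)/(2π))`, with `w` the fractional part. -/
noncomputable def comFree {n : ℕ} (ε : Fin n → ℝ) : Fin n → ℝ :=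
  fun i => Int.fract (ε i - theta ε / (2 * π))

private lemma sin_two_pi_fract (x : ℝ) : Real.sin (2 * π * Int.fract x) = Real.sin (2 * π * x) := by
  rw [Int.fract, mul_sub]
  have : (2 : ℝ) * π * ↑⌊x⌋ = (⌊x⌋ : ℝ) * (2 * π) := by ring
  rw [this, Real.sin_sub_int_mul_two_pi]

private lemma cos_two_pi_fract (x : ℝ) : Real.cos (2 * π * Int.fract x) = Real.cos (2 * π * x) := by
  rw [Int.fract, mul_sub]
  have : (2 : ℝ) * π * ↑⌊x⌋ = (⌊x⌋ : ℝ) * (2 * π) := by ring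
  rw [this, Real.cos_sub_int_mul_two_pi]

private lemma zmk_eq {n : ℕ} (ε : Fin n → ℝ) :
    (⟨xbar ε, ybar ε⟩ : ℂ) = (1 / (n : ℝ) : ℂ) * ∑ j : Fin n, Complex.exp ((2 * π * ε j : ℝ) * Complex.I) := by
  have hsum : ∑ j : Fin n, Complex.exp ((2 * π * ε j : ℝ) * Complex.I)
      = (⟨∑ j : Fin n, Real.cos (2 * π * ε j), ∑ j : Fin n, Real.sin (2 * π * ε j)⟩ : ℂ) := by
    apply Complex.ext <;>
      simp only [Complex.re_sum, Complex.im_sum, Complex.exp_ofReal_mul_I_re,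
        Complex.exp_ofReal_mul_I_im]
  rw [hsum]
  apply Complex.ext <;>
    simp [xbar, ybar, Complex.mul_re, Complex.mul_im, Complex.ofReal_re, Complex.ofReal_im,
      Complex.div_re, Complex.div_im]


/-- The periodic CoM-free map is invariant under entrywise wrapping combined with a common
shift: `m(w(ε + r·1)) = m(ε)`. -/
theorem comFree_wrap_shift_invariant {n : ℕ} (ε : Fin n → ℝ)
    (hne : ¬(xbar ε = 0 ∧ ybar ε = 0)) (r : ℝ) :
    comFree (fun i => Int.fract (ε i + r)) = comFree ε := by
  set ε' : Fin n → ℝ := fun i => Int.fract (ε i + r) with hε'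
  have hz : (⟨xbar ε, ybar ε⟩ : ℂ) ≠ 0 := by
    intro h
    exact hne ⟨congrArg Complex.re h, congrArg Complex.im h⟩
  -- z' = exp(2πr I) * z
  have hzz : (⟨xbar ε', ybar ε'⟩ : ℂ) = Complex.exp ((2 * π * r : ℝ) * Complex.I) * ⟨xbar ε, ybar ε⟩ := by
    rw [zmk_eq, zmk_eq]
    simp only [Finset.mul_sum]
    refine Finset.sum_congr rfl fun j _ => ?_
    rw [mul_left_comm]
    congr 1
    rw [← Complex.exp_add, ← add_mul, ← Complex.ofReal_add]
    have h1 : Real.sin (2 * π * ε' j) = Real.sin (2 * π * (ε j + r)) := sin_two_pi_fract _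
    have h2 : Real.cos (2 * π * ε' j) = Real.cos (2 * π * (ε j + r)) := cos_two_pi_fract _
    have : (2 * π * r + 2 * π * ε j : ℝ) = 2 * π * (ε j + r) := by ring
    rw [this]
    apply Complex.ext <;>
      simp only [← Complex.ofReal_ofNat, ← Complex.ofReal_mul, ← Complex.ofReal_add,
        Complex.exp_ofReal_mul_I_re, Complex.exp_ofReal_mul_I_im, h1, h2]
  have hz' : (⟨xbar ε', ybar ε'⟩ : ℂ) ≠ 0 := by
    rw [hzz]; exact mul_ne_zero (Complex.exp_ne_zero _) hz
  -- angle equality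
  have hang : (theta ε' : Real.Angle) = (2 * π * r + theta ε : ℝ) := by
    show ((⟨xbar ε', ybar ε'⟩ : ℂ).arg : Real.Angle) = _
    rw [hzz, Complex.arg_mul_coe_angle (Complex.exp_ne_zero _) hz, Complex.arg_exp_mul_I,
      Real.Angle.coe_toIocMod, ← Real.Angle.coe_add]
    rfl
  rw [Real.Angle.angle_eq_iff_two_pi_dvd_sub] at hang
  obtain ⟨k, hk⟩ := hang
  -- theta ε' = 2πr + theta ε + 2πk
  have hpi : (2 : ℝ) * π ≠ 0 := by positivity
  have hθ' : theta ε' / (2 * π) = r + theta ε / (2 * π) + k := by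
    field_simp
    linarith [hk]
  funext i
  show Int.fract (Int.fract (ε i + r) - theta ε' / (2 * π)) = Int.fract (ε i - theta ε / (2 * π))
  rw [show Int.fract (ε i + r) = (ε i + r) - (⌊ε i + r⌋ : ℝ) from rfl,
    sub_right_comm, Int.fract_sub_intCast, hθ']
  have : ε i + r - (r + theta ε / (2 * π) + k) = (ε i - theta ε / (2 * π)) - k := by ring
  rw [this, Int.fract_sub_intCast]
end

section
/- The map m is idempotent: for any ε ∈ ℝ^n with (x̄(ε), ȳ(ε)) ≠ (0,0), m(m(ε)) = m(ε). -/
open Real Finset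

lemma two_pi_comFree {n : ℕ} (ε : Fin n → ℝ) (j : Fin n) :
    Real.cos (2 * π * comFree ε j) = Real.cos (2 * π * ε j - theta ε) ∧
    Real.sin (2 * π * comFree ε j) = Real.sin (2 * π * ε j - theta ε) := by
  have hπ : (2 * π) ≠ 0 := by positivity
  have h : 2 * π * comFree ε j
      = (2 * π * ε j - theta ε) - (⌊ε j - theta ε / (2 * π)⌋ : ℤ) * (2 * π) := by
    simp only [comFree, Int.fract]
    field_simp
  rw [h, Real.cos_sub_int_mul_two_pi, Real.sin_sub_int_mul_two_pi]
  exact ⟨rfl, rfl⟩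

/-- The periodic CoM-free map is idempotent: `m(m(ε)) = m(ε)`. -/
theorem comFree_idempotent {n : ℕ} (ε : Fin n → ℝ)
    (hne : ¬(xbar ε = 0 ∧ ybar ε = 0)) :
    comFree (comFree ε) = comFree ε := by
  set z : ℂ := ⟨xbar ε, ybar ε⟩ with hz
  have hz0 : z ≠ 0 := by
    intro h
    exact hne ⟨congrArg Complex.re h, congrArg Complex.im h⟩
  have habs : ‖z‖ > 0 := norm_pos_iff.mpr hz0
  have hcos : Real.cos (theta ε) = xbar ε / ‖z‖ := by
    simpa [theta] using Complex.cos_arg hz0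
  have hsin : Real.sin (theta ε) = ybar ε / ‖z‖ := by
    simp [theta, Complex.sin_arg, hz]
  -- compute xbar and ybar of comFree ε
  have hx : xbar (comFree ε)
      = Real.cos (theta ε) * xbar ε + Real.sin (theta ε) * ybar ε := by
    have hsum : ∑ j : Fin n, Real.cos (2 * π * comFree ε j)
        = Real.cos (theta ε) * ∑ j : Fin n, Real.cos (2 * π * ε j)
          + Real.sin (theta ε) * ∑ j : Fin n, Real.sin (2 * π * ε j) := by
      rw [Finset.mul_sum, Finset.mul_sum, ← Finset.sum_add_distrib]
      refine Finset.sum_congr rfl fun j _ => ?_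
      rw [(two_pi_comFree ε j).1, Real.cos_sub]; ring
    simp only [xbar, ybar, hsum]; ring
  have hy : ybar (comFree ε)
      = Real.cos (theta ε) * ybar ε - Real.sin (theta ε) * xbar ε := by
    have hsum : ∑ j : Fin n, Real.sin (2 * π * comFree ε j)
        = Real.cos (theta ε) * ∑ j : Fin n, Real.sin (2 * π * ε j)
          - Real.sin (theta ε) * ∑ j : Fin n, Real.cos (2 * π * ε j) := by
      rw [Finset.mul_sum, Finset.mul_sum, ← Finset.sum_sub_distrib]
      refine Finset.sum_congr rfl fun j _ => ?_
      rw [(two_pi_comFree ε j).2, Real.sin_sub]; ring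
    simp only [xbar, ybar, hsum]; ring
  have hy0 : ybar (comFree ε) = 0 := by
    rw [hy, hcos, hsin]; field_simp; ring
  have hx0 : 0 ≤ xbar (comFree ε) := by
    rw [hx, hcos, hsin]
    have : xbar ε / ‖z‖ * xbar ε + ybar ε / ‖z‖ * ybar ε
        = (xbar ε ^ 2 + ybar ε ^ 2) / ‖z‖ := by ring
    rw [this]
    positivity
  have htheta0 : theta (comFree ε) = 0 := by
    rw [theta, Complex.arg_eq_zero_iff]
    exact ⟨hx0, hy0⟩
  funext i
  simp [comFree, htheta0, Int.fract_fract]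
end
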